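/- (Lemma 2.4(2), consequence.) For every k ≥ 1, every function in W_k is a term operation of L, i.e., W_k ⊆ Clo_k(L). -/

import Mathlib

/-- The natural projection `ZMod 12 → ZMod 4`. -/
def pi4 : ZMod 12 →+* ZMod 4 := ZMod.castHom (show (4:ℕ) ∣ 12 by norm_num) (ZMod 4)

/-- The cocycle `t` of Vaughan–Lee's loop. -/
def t (x y : ZMod 12) : ZMod 12 :=
  if (pi4 x = 1 ∧ pi4 y = 3) ∨ (pi4 x = 3 ∧ pi4 y = 1) then 4 else 0

/-- The multiplication of Vaughan–Lee's loop `L`. -/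
def mulL (x y : ZMod 12) : ZMod 12 := x + y + t x y

/-- `InClo k h` means `h` is a `k`-ary term function of `L`:
`h` lies in the closure of the projections under the pointwise loop operation. -/
inductive InClo (k : ℕ) : ((Fin k → ZMod 12) → ZMod 12) → Prop
  | proj (i : Fin k) : InClo k (fun x => x i)
  | mul {g h : (Fin k → ZMod 12) → ZMod 12} :
      InClo k g → InClo k h → InClo k (fun x => mulL (g x) (h x))

namespace VL

lemma t_pi4 (a b : ZMod 12) : pi4 (t a b) = 0 := by
  unfold t; split <;> decide

lemma t_same (a b : ZMod 12) (h : pi4 a = pi4 b) : t a b = 0 := by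
  unfold t; rw [h]
  have : ¬((pi4 b = 1 ∧ pi4 b = 3) ∨ (pi4 b = 3 ∧ pi4 b = 1)) := by
    rintro (⟨h1, h2⟩ | ⟨h1, h2⟩) <;> rw [h1] at h2 <;> exact absurd h2 (by decide)
  rw [if_neg this]

lemma t_diag (a : ZMod 12) : t a a = 0 := t_same a a rfl

lemma t_even_right (a : ZMod 12) (z : ZMod 12) : t a (z + z) = 0 := by
  unfold t
  have h2 : ∀ p : ZMod 4, p + p ≠ 3 ∧ p + p ≠ 1 := by decide
  have : ¬((pi4 a = 1 ∧ pi4 (z + z) = 3) ∨ (pi4 a = 3 ∧ pi4 (z + z) = 1)) := by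
    rw [map_add]
    rintro (⟨h1, hb⟩ | ⟨h1, hb⟩)
    · exact (h2 (pi4 z)).1 hb
    · exact (h2 (pi4 z)).2 hb
  rw [if_neg this]

lemma t_zero_left (a b : ZMod 12) (h : pi4 a = 0) : t a b = 0 := by
  unfold t
  have : ¬((pi4 a = 1 ∧ pi4 b = 3) ∨ (pi4 a = 3 ∧ pi4 b = 1)) := by
    rintro (⟨h1, _⟩ | ⟨h1, _⟩) <;> rw [h] at h1 <;> exact absurd h1 (by decide)
  rw [if_neg this]

lemma t_shift (a b g h : ZMod 12) (hg : pi4 g = 0) (hh : pi4 h = 0) :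
    t (a + g) (b + h) = t a b := by
  unfold t; rw [map_add, map_add, hg, hh, add_zero, add_zero]

lemma mulL_eq (a b : ZMod 12) : mulL a b = a + b + t a b := rfl

variable {k : ℕ}

lemma inclo_congr {f g : (Fin k → ZMod 12) → ZMod 12} (h : ∀ x, f x = g x) :
    InClo k f → InClo k g := fun hf => (funext h : f = g) ▸ hf

def P (k : ℕ) (f : (Fin k → ZMod 12) → ZMod 12) : Prop :=
  InClo k f ∧ ∀ x, pi4 (f x) = 0

lemma P_add {f g : (Fin k → ZMod 12) → ZMod 12} (hf : P k f) (hg : P k g) :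
    P k (fun x => f x + g x) := by
  refine ⟨inclo_congr (fun x => ?_) (InClo.mul hf.1 hg.1), fun x => by
    rw [map_add, hf.2 x, hg.2 x, add_zero]⟩
  rw [mulL_eq, t_zero_left _ _ (hf.2 x), add_zero]

lemma P_congr {f g : (Fin k → ZMod 12) → ZMod 12} (h : ∀ x, f x = g x) (hf : P k f) : P k g :=
  ⟨inclo_congr h hf.1, fun x => (h x) ▸ hf.2 x⟩

def lin (u : Fin k → ℕ) : (Fin k → ZMod 12) → ZMod 12 := fun x => ∑ i, (u i : ZMod 12) * x i

def Real (u : Fin k → ℕ) (g : (Fin k → ZMod 12) → ZMod 12) : Prop :=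
  InClo k (fun x => lin u x + g x) ∧ ∀ x, pi4 (g x) = 0

lemma real_congr {u : Fin k → ℕ} {g g' : (Fin k → ZMod 12) → ZMod 12}
    (h : ∀ x, g x = g' x) (hg : Real u g) : Real u g' := by
  have : g = g' := funext h
  exact this ▸ hg

lemma real_ucongr {u u' : Fin k → ℕ} {g : (Fin k → ZMod 12) → ZMod 12}
    (h : ∀ i, u i = u' i) (hg : Real u g) : Real u' g := by
  have : u = u' := funext h
  exact this ▸ hg

lemma lin_add (u v : Fin k → ℕ) (x : Fin k → ZMod 12) :
    lin (fun i => u i + v i) x = lin u x + lin v x := by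
  unfold lin
  rw [← Finset.sum_add_distrib]
  refine Finset.sum_congr rfl (fun i _ => ?_)
  push_cast
  ring

lemma real_mul {u v : Fin k → ℕ} {g h : (Fin k → ZMod 12) → ZMod 12}
    (hu : Real u g) (hv : Real v h) :
    Real (fun i => u i + v i) (fun x => g x + h x + t (lin u x) (lin v x)) := by
  constructor
  · refine inclo_congr (fun x => ?_) (InClo.mul hu.1 hv.1)
    rw [mulL_eq, t_shift _ _ _ _ (hu.2 x) (hv.2 x), lin_add]
    ring
  · intro x
    rw [map_add, map_add, hu.2 x, hv.2 x, t_pi4, add_zero, add_zero]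

lemma lin_single (j : Fin k) (c : ℕ) (x : Fin k → ZMod 12) :
    lin (fun i => if i = j then c else 0) x = (c : ZMod 12) * x j := by
  unfold lin
  rw [Finset.sum_eq_single j]
  · simp
  · intro b _ hbj; simp [hbj]
  · intro hj; exact absurd (Finset.mem_univ j) hj

lemma real_single (j : Fin k) : Real (fun i => if i = j then 1 else 0) (fun _ => 0) := by
  constructor
  · refine inclo_congr (fun x => ?_) (InClo.proj j)
    rw [lin_single, Nat.cast_one, one_mul, add_zero]
  · intro x; simp

lemma real_single4 (j : Fin k) : Real (fun i => if i = j then 4 else 0) (fun _ => 0) := by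
  constructor
  · have h1 : InClo k (fun x => x j + x j) := by
      refine inclo_congr (fun x => ?_) (InClo.mul (InClo.proj j) (InClo.proj j))
      rw [mulL_eq, t_diag, add_zero]
    have h2 : InClo k (fun x => (x j + x j) + (x j + x j)) := by
      refine inclo_congr (fun x => ?_) (InClo.mul h1 h1)
      rw [mulL_eq, t_diag, add_zero]
    refine inclo_congr (fun x => ?_) h2
    rw [lin_single, add_zero]
    push_cast
    ring
  · intro x; simp

end VL

namespace VL
variable {k : ℕ}

lemma real_step (j : Fin k) {u : Fin k → ℕ} {g : (Fin k → ZMod 12) → ZMod 12}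
    (hu : Real u g) :
    Real (fun i => u i + (if i = j then 1 else 0))
      (fun x => g x + t (lin u x) (x j)) := by
  have h := real_mul hu (real_single j)
  refine real_congr (fun x => ?_) h
  rw [lin_single, Nat.cast_one, one_mul, add_zero]

lemma real_pump2 (c : Fin k) {u : Fin k → ℕ} {g : (Fin k → ZMod 12) → ZMod 12}
    (hu : Real u g) :
    Real (fun i => u i + (if i = c then 2 else 0)) g := by
  constructor
  · have h1 : InClo k (fun x => x c + x c) := by
      refine inclo_congr (fun x => ?_) (InClo.mul (InClo.proj c) (InClo.proj c))
      rw [mulL_eq, t_diag, add_zero]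
    refine inclo_congr (fun x => ?_) (InClo.mul hu.1 h1)
    rw [mulL_eq, t_even_right, add_zero, lin_add, lin_single]
    push_cast
    ring
  · exact hu.2

lemma real_build : ∀ (n : ℕ) (m : Fin k → ℕ), (∑ i, m i) = n →
    ∀ (u : Fin k → ℕ) (g : (Fin k → ZMod 12) → ZMod 12), Real u g →
    ∃ g', Real (fun i => u i + m i) g' := by
  intro n
  induction n using Nat.strong_induction_on with
  | _ n ih =>
    intro m hm u g hu
    by_cases h0 : ∀ i, m i = 0
    · exact ⟨g, real_ucongr (fun i => by rw [h0 i]; ring) hu⟩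
    · push_neg at h0
      obtain ⟨j, hj⟩ := h0
      set m' := Function.update m j (m j - 1) with hm'
      have hlt : (∑ i, m' i) < n := by
        rw [← hm]
        refine Finset.sum_lt_sum (fun i _ => ?_) ⟨j, Finset.mem_univ j, ?_⟩
        · by_cases hij : i = j
          · subst hij; simp [hm', Function.update_self]
          · simp [hm', Function.update_of_ne hij]
        · simp [hm', Function.update_self]; omega
      obtain ⟨g', hg'⟩ := ih _ hlt m' rfl _ _ (real_step j hu)
      refine ⟨g', real_ucongr (fun i => ?_) hg'⟩
      by_cases hij : i = j
      · subst hij; simp [hm', Function.update_self]; omega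
      · simp [hm', Function.update_of_ne hij, hij]

lemma real_pump_many : ∀ (n : ℕ) (m : Fin k → ℕ), (∑ i, m i) = n →
    ∀ (u : Fin k → ℕ) (g : (Fin k → ZMod 12) → ZMod 12), Real u g →
    Real (fun i => u i + 2 * m i) g := by
  intro n
  induction n using Nat.strong_induction_on with
  | _ n ih =>
    intro m hm u g hu
    by_cases h0 : ∀ i, m i = 0
    · exact real_ucongr (fun i => by rw [h0 i]; ring) hu
    · push_neg at h0
      obtain ⟨j, hj⟩ := h0
      set m' := Function.update m j (m j - 1) with hm'
      have hlt : (∑ i, m' i) < n := by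
        rw [← hm]
        refine Finset.sum_lt_sum (fun i _ => ?_) ⟨j, Finset.mem_univ j, ?_⟩
        · by_cases hij : i = j
          · subst hij; simp [hm', Function.update_self]
          · simp [hm', Function.update_of_ne hij]
        · simp [hm', Function.update_self]; omega
      have h2 := ih _ hlt m' rfl _ _ (real_pump2 j hu)
      refine real_ucongr (fun i => ?_) h2
      by_cases hij : i = j
      · subst hij; simp [hm', Function.update_self]; omega
      · simp [hm', Function.update_of_ne hij, hij]

lemma garbage_P {u : Fin k → ℕ} {g : (Fin k → ZMod 12) → ZMod 12}
    (hu : Real u g) : P k g := by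
  have hdup := real_mul hu hu
  have hdup' : Real (fun i => u i + u i) (fun x => g x + g x) :=
    real_congr (fun x => by rw [t_diag, add_zero]) hdup
  set c : Fin k → ℕ := fun i => ((12 - (u i + u i) % 12) % 12) / 2 with hc
  have hfin := real_pump_many (∑ i, c i) c rfl _ _ hdup'
  have hzero : ∀ x, lin (fun i => (u i + u i) + 2 * c i) x = 0 := by
    intro x
    unfold lin
    refine Finset.sum_eq_zero (fun i _ => ?_)
    have h12 : ((u i + u i) + 2 * c i) % 12 = 0 := by
      simp only [hc]; omega
    have : (((u i + u i) + 2 * c i : ℕ) : ZMod 12) = 0 := by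
      rw [(ZMod.natCast_eq_zero_iff _ _)]
      omega
    rw [this, zero_mul]
  have h2g : InClo k (fun x => g x + g x) := by
    refine inclo_congr (fun x => ?_) hfin.1
    rw [hzero x, zero_add]
  have hg4 : InClo k g := by
    refine inclo_congr (fun x => ?_) (InClo.mul h2g h2g)
    rw [mulL_eq, t_diag, add_zero]
    have : pi4 (g x) = 0 := hu.2 x
    revert this
    generalize g x = z
    revert z
    decide
  exact ⟨hg4, hu.2⟩

lemma gen {u v : Fin k → ℕ}
    (hu : ∃ g, Real u g) (hv : ∃ g, Real v g) :
    P k (fun x => t (lin u x) (lin v x)) := by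
  obtain ⟨g, hg⟩ := hu
  obtain ⟨h, hh⟩ := hv
  have hPg := garbage_P hg
  have hPh := garbage_P hh
  have hPG := garbage_P (real_mul hg hh)
  have hsum := P_add (P_add (P_add (P_add hPG hPg) hPg) hPh) hPh
  refine P_congr (fun x => ?_) hsum
  have h3 : ∀ z : ZMod 12, pi4 z = 0 → z + z + z = 0 := by decide
  have e1 : g x + g x + g x = 0 := h3 _ (hg.2 x)
  have e2 : h x + h x + h x = 0 := h3 _ (hh.2 x)
  have : g x + h x + t (lin u x) (lin v x) + g x + g x + h x + h x
      = t (lin u x) (lin v x) + (g x + g x + g x) + (h x + h x + h x) := by ring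
  rw [this, e1, e2, add_zero, add_zero]

end VL

namespace VL
variable {k : ℕ}

lemma P_zero (hk : 1 ≤ k) : P k (fun _ => (0 : ZMod 12)) :=
  garbage_P (real_single4 (⟨0, hk⟩ : Fin k))

lemma P_nsmul (hk : 1 ≤ k) (n : ℕ) {f : (Fin k → ZMod 12) → ZMod 12} (hf : P k f) :
    P k (fun x => n • f x) := by
  induction n with
  | zero => exact P_congr (fun x => by simp) (P_zero hk)
  | succ m ihm =>
      refine P_congr (fun x => ?_) (P_add ihm hf)
      rw [succ_nsmul]

lemma P_sum (hk : 1 ≤ k) {ι : Type*} (s : Finset ι) (F : ι → (Fin k → ZMod 12) → ZMod 12)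
    (h : ∀ i ∈ s, P k (F i)) : P k (fun x => ∑ i ∈ s, F i x) := by
  classical
  induction s using Finset.induction_on with
  | empty => exact P_congr (fun x => by simp) (P_zero hk)
  | insert _ _ hni ih =>
      rename_i a s'
      refine P_congr (fun x => ?_) (P_add (h a (Finset.mem_insert_self a s'))
        (ih (fun i hi => h i (Finset.mem_insert_of_mem hi))))
      rw [Finset.sum_insert hni]

lemma pi4_lin (u : Fin k → ℕ) (x : Fin k → ZMod 12) :
    pi4 (lin u x) = ∑ i, (u i : ZMod 4) * pi4 (x i) := by
  unfold lin
  rw [map_sum]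
  refine Finset.sum_congr rfl (fun i _ => ?_)
  rw [map_mul, map_natCast]

def Ffun (s : Fin k → ZMod 4) (i : Fin k) : (Fin k → ZMod 12) → ZMod 12 :=
  fun x => if ((pi4 (x i) = 1 ∨ pi4 (x i) = 3) ∧ (∑ j, s j * pi4 (x j)) = 0) then 4 else 0

lemma P_Ffun (s : Fin k → ZMod 4) (i : Fin k) : P k (Ffun s i) := by
  classical
  set u : Fin k → ℕ := fun j => (if j = i then 4 else 0) + (if j = i then 1 else 0) with hu
  set v : Fin k → ℕ := fun j => (if j = i then 4 else 0) + (s j - if j = i then 1 else 0).val with hv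
  have hru : ∃ g, Real u g := real_build _ _ rfl _ _ (real_single4 i)
  have hrv : ∃ g, Real v g := real_build _ _ rfl _ _ (real_single4 i)
  refine P_congr (fun x => ?_) (gen hru hrv)
  have pa : pi4 (lin u x) = pi4 (x i) := by
    rw [pi4_lin]
    rw [Finset.sum_eq_single i]
    · simp only [hu]
      push_cast
      have h5 : ((5:ZMod 4)) = 1 := by decide
      rw [h5, one_mul]
    · intro b _ hbj
      simp [hu, hbj]
    · intro hj; exact absurd (Finset.mem_univ i) hj
  have pb : pi4 (lin v x) = (∑ j, s j * pi4 (x j)) - pi4 (x i) := by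
    rw [pi4_lin]
    have hcast : ∀ j, ((v j : ℕ) : ZMod 4) = s j - (if j = i then 1 else 0) := by
      intro j
      have h40 : ((4:ℕ) : ZMod 4) = 0 := by decide
      by_cases hj : j = i
      · simp only [hv, if_pos hj]
        push_cast
        rw [ZMod.natCast_val, ZMod.cast_id]
        have h4 : ((4:ZMod 4)) = 0 := by decide
        rw [h4, zero_add]
      · simp only [hv, if_neg hj]
        push_cast
        rw [ZMod.natCast_val, ZMod.cast_id]
        simp
    rw [Finset.sum_congr rfl (fun j _ => by rw [hcast j])]
    rw [Finset.sum_congr rfl (fun j _ => sub_mul (s j) _ (pi4 (x j)))]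
    rw [Finset.sum_sub_distrib]
    congr 1
    rw [Finset.sum_eq_single i]
    · simp
    · intro b _ hbj; simp [hbj]
    · intro hj; exact absurd (Finset.mem_univ i) hj
  show t (lin u x) (lin v x) = _
  unfold t Ffun
  rw [pa, pb]
  have hiff : ∀ A D : ZMod 4, ((A = 1 ∧ D - A = 3) ∨ (A = 3 ∧ D - A = 1)) ↔
      ((A = 1 ∨ A = 3) ∧ D = 0) := by decide
  rw [if_congr (hiff (pi4 (x i)) (∑ j, s j * pi4 (x j))) rfl rfl]

end VL

namespace VL
variable {k : ℕ}

def dot (a b : Fin k → ZMod 4) : ZMod 4 := ∑ i, a i * b i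

lemma dot_add_left (a b c : Fin k → ZMod 4) : dot (a + b) c = dot a c + dot b c := by
  unfold dot
  rw [← Finset.sum_add_distrib]
  exact Finset.sum_congr rfl (fun i _ => by rw [Pi.add_apply, add_mul])

lemma dot_sub_left (a b c : Fin k → ZMod 4) : dot (a - b) c = dot a c - dot b c := by
  unfold dot
  rw [← Finset.sum_sub_distrib]
  exact Finset.sum_congr rfl (fun i _ => by rw [Pi.sub_apply, sub_mul])

lemma dot_single (j : Fin k) (c : ZMod 4) (y : Fin k → ZMod 4) :
    dot (fun i => if i = j then c else 0) y = c * y j := by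
  unfold dot
  rw [Finset.sum_eq_single j]
  · simp
  · intro b _ hbj; simp [hbj]
  · intro hj; exact absurd (Finset.mem_univ j) hj

lemma dot_neg_right (s y : Fin k → ZMod 4) : dot s (-y) = - dot s y := by
  unfold dot
  rw [← Finset.sum_neg_distrib]
  exact Finset.sum_congr rfl (fun i _ => by rw [Pi.neg_apply, mul_neg])

lemma fiber_card (v : Fin k → ZMod 4) (i : Fin k) (hvi : v i = 1 ∨ v i = 3) (c1 c2 : ZMod 4) :
    (Finset.univ.filter (fun s : Fin k → ZMod 4 => dot s v = c1)).card
    = (Finset.univ.filter (fun s : Fin k → ZMod 4 => dot s v = c2)).card := by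
  classical
  have hvv : v i * v i = 1 := by rcases hvi with h | h <;> rw [h] <;> decide
  set d : Fin k → ZMod 4 := (fun j => if j = i then (c2 - c1) * v i else 0) with hdd
  have hd : dot d v = c2 - c1 := by
    rw [hdd, dot_single, mul_assoc, hvv, mul_one]
  refine Finset.card_bij' (fun s _ => s + d) (fun s _ => s - d) ?_ ?_ ?_ ?_
  · intro a ha
    rw [Finset.mem_filter] at ha ⊢
    refine ⟨Finset.mem_univ _, ?_⟩
    rw [dot_add_left, ha.2, hd]
    ring
  · intro a ha
    rw [Finset.mem_filter] at ha ⊢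
    refine ⟨Finset.mem_univ _, ?_⟩
    rw [dot_sub_left, ha.2, hd]
    ring
  · intro a _; show a + d - d = a; rw [add_sub_cancel_right]
  · intro a _; show a - d + d = a; rw [sub_add_cancel]

lemma card_univ_pi : (Finset.univ : Finset (Fin k → ZMod 4)).card = 4 ^ k := by
  rw [Finset.card_univ]
  rw [Fintype.card_pi]
  simp [ZMod.card]

lemma fiber_zero_card (hk : 1 ≤ k) (v : Fin k → ZMod 4) (i : Fin k)
    (hvi : v i = 1 ∨ v i = 3) :
    (Finset.univ.filter (fun s : Fin k → ZMod 4 => dot s v = 0)).card % 3 = 1 := by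
  classical
  set N := (Finset.univ.filter (fun s : Fin k → ZMod 4 => dot s v = 0)).card with hN
  have htot : (Finset.univ : Finset (Fin k → ZMod 4)).card
      = ∑ c : ZMod 4, (Finset.univ.filter (fun s : Fin k → ZMod 4 => dot s v = c)).card :=
    Finset.card_eq_sum_card_fiberwise (fun x _ => Finset.mem_univ _)
  have hsame : ∀ c : ZMod 4, (Finset.univ.filter (fun s : Fin k → ZMod 4 => dot s v = c)).card = N :=
    fun c => (fiber_card v i hvi 0 c).symm
  have h4N : 4 ^ k = 4 * N := by
    rw [← card_univ_pi, htot]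
    rw [Finset.sum_congr rfl (fun c _ => hsame c), Finset.sum_const]
    simp [ZMod.card]
  have hNval : N = 4 ^ (k - 1) := by
    have : 4 ^ k = 4 * 4 ^ (k - 1) := by
      conv_lhs => rw [show k = 1 + (k - 1) by omega]
      rw [pow_add, pow_one]
    omega
  rw [hNval, Nat.pow_mod]
  norm_num

lemma smul4_of_mod3 (N : ℕ) (h : N % 3 = 1) : N • (4 : ZMod 12) = 4 := by
  obtain ⟨q, hq⟩ : ∃ q, N = 3 * q + 1 := ⟨N / 3, by omega⟩
  subst hq
  rw [nsmul_eq_mul]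
  have h12 : (12 : ZMod 12) = 0 := by decide
  calc ((3 * q + 1 : ℕ) : ZMod 12) * 4 = (q : ZMod 12) * 12 + 4 := by push_cast; ring
    _ = 4 := by rw [h12, mul_zero, zero_add]

end VL

namespace VL
variable {k : ℕ}

lemma key_sum (hk : 1 ≤ k) (v y : Fin k → ZMod 4) (i : Fin k)
    (hvi : v i = 1 ∨ v i = 3) (hyi : y i = 1 ∨ y i = 3) :
    ∑ s : Fin k → ZMod 4,
      (if dot s v = 0 then 1 else if dot s v = 2 then 2 else 0 : ℕ) •
        (if dot s y = 0 then (4 : ZMod 12) else 0)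
    = if y = v ∨ y = -v then 4 else 0 := by
  classical
  have hsummand : ∀ s : Fin k → ZMod 4,
      (if dot s v = 0 then 1 else if dot s v = 2 then 2 else 0 : ℕ) •
        (if dot s y = 0 then (4 : ZMod 12) else 0)
      = (if dot s v = 0 ∧ dot s y = 0 then (4:ZMod 12) else 0)
        + (if dot s v = 2 ∧ dot s y = 0 then (8:ZMod 12) else 0) := by
    intro s
    by_cases h1 : dot s v = 0 <;> by_cases h2 : dot s y = 0
    · have h3 : ¬ dot s v = 2 := by rw [h1]; decide
      simp [h1, h2, h3]
      intro hh; exact absurd hh (by decide)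
    · simp [h1, h2]
    · by_cases h3 : dot s v = 2
      · rw [h3]
        simp [h2]
        decide
      · simp [h1, h2, h3]
    · by_cases h3 : dot s v = 2 <;> simp [h1, h2, h3]
  rw [Finset.sum_congr rfl (fun s _ => hsummand s), Finset.sum_add_distrib,
    ← Finset.sum_filter, ← Finset.sum_filter, Finset.sum_const, Finset.sum_const]
  by_cases hyv : y = v ∨ y = -v
  · rw [if_pos hyv]
    have hcond1 : ∀ s : Fin k → ZMod 4, (dot s v = 0 ∧ dot s y = 0) ↔ dot s v = 0 := by
      intro s
      rcases hyv with h | h <;> subst h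
      · exact ⟨fun h => h.1, fun h => ⟨h, h⟩⟩
      · rw [dot_neg_right, neg_eq_zero, and_self]
    have hcond2 : ∀ s : Fin k → ZMod 4, ¬ (dot s v = 2 ∧ dot s y = 0) := by
      intro s hs
      have h0 : dot s v = 0 := by
        rcases hyv with h | h
        · rw [← h]; exact hs.2
        · have := hs.2
          rw [h, dot_neg_right, neg_eq_zero] at this
          exact this
      rw [h0] at hs
      exact absurd hs.1 (by decide)
    have he2 : (Finset.univ.filter (fun s : Fin k → ZMod 4 => dot s v = 2 ∧ dot s y = 0)) = ∅ := by
      refine Finset.filter_false_of_mem (fun s _ => hcond2 s)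
    have he1 : (Finset.univ.filter (fun s : Fin k → ZMod 4 => dot s v = 0 ∧ dot s y = 0))
        = (Finset.univ.filter (fun s : Fin k → ZMod 4 => dot s v = 0)) := by
      apply Finset.filter_congr
      intro s _
      exact (by rw [hcond1 s])
    rw [he1, he2]
    rw [smul4_of_mod3 _ (fiber_zero_card hk v i hvi)]
    simp
  · rw [if_neg hyv]
    push_neg at hyv
    obtain ⟨hyv1, hyv2⟩ := hyv
    by_cases hex : ∃ s2 : Fin k → ZMod 4, dot s2 v = 2 ∧ dot s2 y = 0
    · obtain ⟨s2, h2v, h2y⟩ := hex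
      have hcards : (Finset.univ.filter (fun s : Fin k → ZMod 4 => dot s v = 0 ∧ dot s y = 0)).card
          = (Finset.univ.filter (fun s : Fin k → ZMod 4 => dot s v = 2 ∧ dot s y = 0)).card := by
        refine Finset.card_bij' (fun s _ => s + s2) (fun s _ => s - s2) ?_ ?_ ?_ ?_
        · intro a ha
          rw [Finset.mem_filter] at ha ⊢
          refine ⟨Finset.mem_univ _, ?_, ?_⟩
          · rw [dot_add_left, ha.2.1, h2v, zero_add]
          · rw [dot_add_left, ha.2.2, h2y, zero_add]
        · intro a ha
          rw [Finset.mem_filter] at ha ⊢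
          refine ⟨Finset.mem_univ _, ?_, ?_⟩
          · rw [dot_sub_left, ha.2.1, h2v, sub_self]
          · rw [dot_sub_left, ha.2.2, h2y, sub_self]
        · intro a _; show a + s2 - s2 = a; rw [add_sub_cancel_right]
        · intro a _; show a - s2 + s2 = a; rw [sub_add_cancel]
      rw [hcards, ← smul_add]
      have : (4 : ZMod 12) + 8 = 0 := by decide
      rw [this, smul_zero]
    · exfalso
      push_neg at hex
      have hno : ∀ s : Fin k → ZMod 4, dot s y = 0 → dot s v = 0 := by
        intro s hs
        have h4 : dot s v = 0 ∨ dot s v = 1 ∨ dot s v = 2 ∨ dot s v = 3 := by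
          generalize dot s v = p
          revert p; decide
        rcases h4 with h | h | h | h
        · exact h
        · exfalso
          refine hex (s + s) ?_ ?_
          · rw [dot_add_left, h]; decide
          · rw [dot_add_left, hs, add_zero]
        · exact absurd hs (hex s h)
        · exfalso
          refine hex (s + s) ?_ ?_
          · rw [dot_add_left, h]; decide
          · rw [dot_add_left, hs, add_zero]
      have hyy : y i * y i = 1 := by rcases hyi with h | h <;> rw [h] <;> decide
      have hvy : ∀ j, v j = (v i * y i) * y j := by
        intro j
        by_cases hji : j = i
        · subst hji
          calc v j = v j * (y j * y j) := by rw [hyy, mul_one]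
            _ = (v j * y j) * y j := by ring
        · set s : Fin k → ZMod 4 :=
            (fun m => if m = j then y i else 0) + (fun m => if m = i then -(y j) else 0) with hss
          have hsy : dot s y = 0 := by
            rw [hss, dot_add_left, dot_single, dot_single]
            ring
          have hsv := hno s hsy
          rw [hss, dot_add_left, dot_single, dot_single] at hsv
          have := congrArg (fun z => y i * z) hsv
          simp only [mul_zero] at this
          calc v j = (y i * y i) * v j := by rw [hyy, one_mul]
            _ = y i * (y i * v j + -(y j) * v i) + y i * y j * v i := by ring
            _ = y i * 0 + y i * y j * v i := by rw [hsv]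
            _ = (v i * y i) * y j := by ring
      have hc : v i * y i = 1 ∨ v i * y i = 3 := by
        rcases hvi with h | h <;> rcases hyi with h' | h' <;> rw [h, h'] <;> decide
      rcases hc with hc | hc
      · refine hyv1 ?_
        refine (funext (fun j => ?_)).symm
        rw [hvy j, hc, one_mul]
      · refine hyv2 ?_
        have h3neg : ∀ p : ZMod 4, 3 * p = -p := by decide
        refine funext (fun j => ?_)
        rw [Pi.neg_apply, hvy j, hc, h3neg, neg_neg]

end VL

namespace VL
variable {k : ℕ}

def Lf : (Fin k → ZMod 4) → (Fin k → ZMod 12) := fun v i => ((v i).val : ZMod 12)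

lemma pi4_Lf (v : Fin k → ZMod 4) (i : Fin k) : pi4 (Lf v i) = v i := by
  unfold Lf
  rw [map_natCast]
  exact ZMod.natCast_rightInverse (v i)

lemma smul_4n (m : ℕ) : (2 * m + 2 * m) • (4 : ZMod 12) = m • (4 : ZMod 12) := by
  rw [nsmul_eq_mul, nsmul_eq_mul]
  have h16 : (16 : ZMod 12) = 4 := by decide
  calc ((2 * m + 2 * m : ℕ) : ZMod 12) * 4 = (m : ZMod 12) * 16 := by push_cast; ring
    _ = (m : ZMod 12) * 4 := by rw [h16]

end VL


/-- `Wset k` is the set of functions `w : (ZMod 12)^k → ZMod 12` taking values in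
`C = {0,4,8}`, vanishing on tuples of even elements, invariant under negation, and
invariant under translation by tuples from `C` (i.e. factoring through `(ZMod 4)^k`). -/
def Wset (k : ℕ) : Set ((Fin k → ZMod 12) → ZMod 12) :=
  { w |
    (∀ x, w x ∈ ({0, 4, 8} : Set (ZMod 12))) ∧
    (∀ x, (∀ i, Even (x i)) → w x = 0) ∧
    (∀ x, w (-x) = w x) ∧
    (∀ x c, (∀ i, c i ∈ ({0, 4, 8} : Set (ZMod 12))) → w (x + c) = w x) }

theorem stmt_11 (k : ℕ) (hk : 1 ≤ k) :
    ∀ w ∈ Wset k, InClo k w := by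
  classical
  intro w hw
  obtain ⟨ha, hb, hc, hd⟩ := hw
  have hfac : ∀ x y : Fin k → ZMod 12, (∀ i, pi4 (x i) = pi4 (y i)) → w x = w y := by
    intro x y hxy
    have h1 : y = x + (y - x) := by ring
    rw [h1]
    refine (hd x (y - x) ?_).symm
    intro i
    have hz : pi4 ((y - x) i) = 0 := by
      rw [Pi.sub_apply, map_sub, hxy i, sub_self]
    have h08 : ∀ z : ZMod 12, pi4 z = 0 → (z = 0 ∨ z = 4 ∨ z = 8) := by decide
    simpa using h08 _ hz
  set bar : (Fin k → ZMod 12) → (Fin k → ZMod 4) := fun x i => pi4 (x i) with hbar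
  set n : (Fin k → ZMod 4) → ℕ :=
    fun v => if w (VL.Lf v) = 4 then 1 else if w (VL.Lf v) = 8 then 2 else 0 with hn
  have hwn : ∀ x, w x = (n (bar x)) • (4 : ZMod 12) := by
    intro x
    have hx : w (VL.Lf (bar x)) = w x := hfac _ _ (fun i => by rw [VL.pi4_Lf])
    have h3 := ha (VL.Lf (bar x))
    simp only [Set.mem_insert_iff, Set.mem_singleton_iff] at h3
    simp only [hn]
    rcases h3 with h | h | h <;> rw [← hx, h]
    · rw [if_neg (by decide : ¬(0:ZMod 12) = 4), if_neg (by decide : ¬(0:ZMod 12) = 8), zero_smul]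
    · rw [if_pos rfl, one_smul]
    · rw [if_neg (by decide : ¬(8:ZMod 12) = 4), if_pos rfl, nsmul_eq_mul]
      decide
  have hLL : ∀ v : Fin k → ZMod 4, w (VL.Lf (-v)) = w (VL.Lf v) := by
    intro v
    have h1 : w (VL.Lf (-v)) = w (-(VL.Lf v)) := by
      apply hfac
      intro i
      rw [VL.pi4_Lf, Pi.neg_apply, Pi.neg_apply, map_neg, VL.pi4_Lf]
    rw [h1, hc]
  have hneg : ∀ v : Fin k → ZMod 4, n (-v) = n v := by
    intro v
    simp only [hn]
    rw [hLL v]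
  set idx : (Fin k → ZMod 4) → Fin k :=
    fun v => if h : ∃ i, v i = 1 ∨ v i = 3 then h.choose else ⟨0, hk⟩ with hidx
  have hidx_spec : ∀ v : Fin k → ZMod 4, (∃ i, v i = 1 ∨ v i = 3) →
      (v (idx v) = 1 ∨ v (idx v) = 3) := by
    intro v hv
    rw [hidx]
    simp only [dif_pos hv]
    exact hv.choose_spec
  set T : Finset (Fin k → ZMod 4) :=
    Finset.univ.filter (fun v => v (idx v) = 1 ∨ v (idx v) = 3) with hT
  have hmemT : ∀ v, v ∈ T ↔ (∃ i, v i = 1 ∨ v i = 3) := by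
    intro v
    rw [hT, Finset.mem_filter]
    constructor
    · rintro ⟨_, h⟩; exact ⟨_, h⟩
    · intro h; exact ⟨Finset.mem_univ _, hidx_spec v h⟩
  have hoddneg : ∀ p : ZMod 4, (p = 1 ∨ p = 3) → (-p = 1 ∨ -p = 3) := by decide
  set RHS : (Fin k → ZMod 12) → ZMod 12 := fun x => ∑ v ∈ T, ∑ s : Fin k → ZMod 4,
      ((2 * n v) * (if VL.dot s v = 0 then 1 else if VL.dot s v = 2 then 2 else 0)) •
        VL.Ffun s (idx v) x with hRHS
  have hP : VL.P k RHS := by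
    apply VL.P_sum hk
    intro v _
    apply VL.P_sum hk
    intro s _
    exact VL.P_nsmul hk _ (VL.P_Ffun s (idx v))
  refine VL.inclo_congr (fun x => ?_) hP.1
  show (∑ v ∈ T, ∑ s : Fin k → ZMod 4,
      ((2 * n v) * (if VL.dot s v = 0 then 1 else if VL.dot s v = 2 then 2 else 0)) •
        VL.Ffun s (idx v) x) = w x
  have hinner : ∀ v ∈ T, (∑ s : Fin k → ZMod 4,
      ((2 * n v) * (if VL.dot s v = 0 then 1 else if VL.dot s v = 2 then 2 else 0)) •
        VL.Ffun s (idx v) x)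
      = (2 * n v) • (if bar x = v ∨ bar x = -v then (4:ZMod 12) else 0) := by
    intro v hv
    have hvodd : v (idx v) = 1 ∨ v (idx v) = 3 := (Finset.mem_filter.1 hv).2
    rw [Finset.sum_congr rfl (fun s _ => mul_smul (2 * n v) _ (VL.Ffun s (idx v) x)),
      ← Finset.smul_sum]
    congr 1
    by_cases hodd : pi4 (x (idx v)) = 1 ∨ pi4 (x (idx v)) = 3
    · have hF : ∀ s : Fin k → ZMod 4, VL.Ffun s (idx v) x
          = (if VL.dot s (bar x) = 0 then (4:ZMod 12) else 0) := by
        intro s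
        show (if _ then _ else _) = _
        rw [if_congr (and_iff_right hodd) rfl rfl]
        rfl
      rw [Finset.sum_congr rfl (fun s _ => by rw [hF s])]
      exact VL.key_sum hk v (bar x) (idx v) hvodd hodd
    · have h1 : ∀ s : Fin k → ZMod 4, VL.Ffun s (idx v) x = 0 := by
        intro s
        exact if_neg (by tauto)
      rw [Finset.sum_congr rfl (fun s _ => by rw [h1 s, smul_zero])]
      rw [Finset.sum_const, smul_zero]
      have hcond : ¬ (bar x = v ∨ bar x = -v) := by
        rintro (h | h)
        · exact hodd (by rw [show pi4 (x (idx v)) = bar x (idx v) from rfl, h]; exact hvodd)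
        · refine hodd ?_
          rw [show pi4 (x (idx v)) = bar x (idx v) from rfl, h, Pi.neg_apply]
          exact hoddneg _ hvodd
      rw [if_neg hcond]
  rw [Finset.sum_congr rfl hinner]
  by_cases hex : ∃ i, (bar x) i = 1 ∨ (bar x) i = 3
  · have hyT : bar x ∈ T := (hmemT _).2 hex
    have hyT' : -(bar x) ∈ T := (hmemT _).2 (by
      obtain ⟨i, hi⟩ := hex
      exact ⟨i, by rw [Pi.neg_apply]; exact hoddneg _ hi⟩)
    have hne : bar x ≠ -(bar x) := by
      intro h
      obtain ⟨i, hi⟩ := hex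
      have h2 := congrFun h i
      rw [Pi.neg_apply] at h2
      have : ∀ p : ZMod 4, (p = 1 ∨ p = 3) → p ≠ -p := by decide
      exact this _ hi h2
    have hsub : ({bar x, -(bar x)} : Finset (Fin k → ZMod 4)) ⊆ T := by
      intro z hz
      rcases Finset.mem_insert.1 hz with h | h
      · exact h ▸ hyT
      · exact (Finset.mem_singleton.1 h) ▸ hyT'
    have hzero : ∀ v ∈ T, v ∉ ({bar x, -(bar x)} : Finset (Fin k → ZMod 4)) →
        (2 * n v) • (if bar x = v ∨ bar x = -v then (4:ZMod 12) else 0) = 0 := by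
      intro v hv hnv
      rw [if_neg, smul_zero]
      rintro (h | h)
      · exact hnv (Finset.mem_insert.2 (Or.inl h.symm))
      · refine hnv (Finset.mem_insert.2 (Or.inr (Finset.mem_singleton.2 ?_)))
        rw [h, neg_neg]
    rw [← Finset.sum_subset hsub hzero, Finset.sum_pair hne]
    rw [if_pos (Or.inl rfl), if_pos (Or.inr (by rw [neg_neg]))]
    rw [hneg (bar x), ← add_smul, VL.smul_4n, ← hwn x]
  · have hw0 : w x = 0 := by
      apply hb
      intro i
      have h02 : (bar x) i = 0 ∨ (bar x) i = 2 := by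
        have h4 : ∀ p : ZMod 4, p = 0 ∨ p = 1 ∨ p = 2 ∨ p = 3 := by decide
        rcases h4 ((bar x) i) with h | h | h | h
        · exact Or.inl h
        · exact absurd ⟨i, Or.inl h⟩ hex
        · exact Or.inr h
        · exact absurd ⟨i, Or.inr h⟩ hex
      have heven : ∀ z : ZMod 12, (pi4 z = 0 ∨ pi4 z = 2) → (∃ r : ZMod 12, z = r + r) := by
        decide
      exact heven _ h02
    rw [hw0]
    apply Finset.sum_eq_zero
    intro v hv
    have hvodd : v (idx v) = 1 ∨ v (idx v) = 3 := (Finset.mem_filter.1 hv).2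
    rw [if_neg, smul_zero]
    rintro (h | h)
    · exact hex ⟨idx v, h ▸ hvodd⟩
    · refine hex ⟨idx v, ?_⟩
      rw [h, Pi.neg_apply]
      exact hoddneg _ hvodd
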